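/- Let $\eta > 0$, $\sigma > 0$. For $r > 0$ let $\nu_r(dz) = \frac{1}{\pi r}e^{-|z|^2/r}\,dA(z)$ be the Gaussian measure on $\mathbb{C}$, and let $\lambda_{\eta,\sigma}(dz) = \int_0^\infty \nu_r(dz)\,\mu_{\eta,\eta,\eta\sigma}(dr)$ be the gamma-mixture of Gaussians, where $\mu_{\eta,\eta,\eta\sigma}(dr) = \frac{1}{\Gamma(\sigma/\eta)}\eta^{-\sigma/\eta}r^{-1+\sigma/\eta}e^{-r/\eta}\,dr$. Then for all $m,n \geq 0$: $\int_{\mathbb{C}} z^m \overline{z^n}\,\lambda_{\eta,\sigma}(dz) = \delta_{m,n}\,n!\,(\sigma \mid -\eta)_n$. -/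

import Mathlib

open MeasureTheory

/-- The Gaussian measure `ν_r(dz) = (πr)⁻¹ e^{-|z|²/r} dA(z)` on `ℂ`. -/
noncomputable def nuC (r : ℝ) : Measure ℂ :=
  volume.withDensity fun z =>
    ENNReal.ofReal ((Real.pi * r)⁻¹ * Real.exp (-‖z‖ ^ 2 / r))

/-- The gamma distribution `μ_{η,η,ησ}(dr) = Γ(σ/η)⁻¹ η^{-σ/η} r^{σ/η-1} e^{-r/η} dr`. -/
noncomputable def gammaMeas (η σ : ℝ) : Measure ℝ :=
  volume.withDensity fun r =>
    ENNReal.ofReal (if 0 < r then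
      (Real.Gamma (σ / η))⁻¹ * η ^ (-(σ / η)) * r ^ (σ / η - 1) * Real.exp (-r / η)
    else 0)

/-- The gamma-mixture of Gaussian measures `λ_{η,σ}(dz) = ∫ ν_r(dz) μ_{η,η,ησ}(dr)`. -/
noncomputable def lambdaMeas (η σ : ℝ) : Measure ℂ := (gammaMeas η σ).bind nuC

open scoped ENNReal NNReal
open ProbabilityTheory

namespace GaussMixAux

/-! ### Generic helper: Bochner integral against `withDensity (ofReal d)` -/

lemma integral_withDensity_ofReal {X : Type*} [MeasurableSpace X] {μ : Measure X} {d : X → ℝ}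
    (hd : Measurable d) (hd0 : ∀ x, 0 ≤ d x) {E : Type*} [NormedAddCommGroup E]
    [NormedSpace ℝ E] (g : X → E) :
    ∫ x, g x ∂(μ.withDensity fun x => ENNReal.ofReal (d x)) = ∫ x, d x • g x ∂μ := by
  rw [show (fun x => ENNReal.ofReal (d x)) = (fun x => ((d x).toNNReal : ℝ≥0∞)) from rfl,
    integral_withDensity_eq_integral_smul hd.real_toNNReal g]
  exact integral_congr_ae (Filter.Eventually.of_forall fun x => by
    show (d x).toNNReal • g x = d x • g x
    rw [NNReal.smul_def, Real.coe_toNNReal _ (hd0 x)])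

/-! ### Gaussian facts -/

lemma measurable_gaussDens (r : ℝ) :
    Measurable fun z : ℂ => (Real.pi * r)⁻¹ * Real.exp (-‖z‖ ^ 2 / r) :=
  measurable_const.mul
    ((((continuous_norm.measurable.pow_const 2).neg.div_const r)).exp)

lemma integrable_gauss_pow {b : ℝ} (hb : 0 < b) (k : ℕ) :
    Integrable (fun z : ℂ => Real.exp (-b * ‖z‖ ^ 2) * ‖z‖ ^ k) volume := by
  have hmaj : Integrable
      (fun z : ℂ => (k.factorial * Real.exp ((2 * b)⁻¹)) * Real.exp (-(b / 2) * ‖z‖ ^ 2))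
      volume := by
    apply Integrable.const_mul
    have h := GaussianFourier.integrable_cexp_neg_mul_sq_norm_add
      (b := ((b / 2 : ℝ) : ℂ)) (V := ℂ) (by simpa using half_pos hb) 0 0
    simp only [zero_mul, add_zero] at h
    have h2 := h.norm
    refine h2.congr (Filter.Eventually.of_forall fun v => ?_)
    show ‖Complex.exp (-((b / 2 : ℝ) : ℂ) * (‖v‖ : ℂ) ^ 2)‖ = Real.exp (-(b / 2) * ‖v‖ ^ 2)
    have hc : -((b / 2 : ℝ) : ℂ) * (‖v‖ : ℂ) ^ 2 = ((-(b / 2) * ‖v‖ ^ 2 : ℝ) : ℂ) := by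
      push_cast; ring
    rw [hc, Complex.norm_exp, Complex.ofReal_re]
  refine hmaj.mono' ?_ (Filter.Eventually.of_forall fun z => ?_)
  · exact ((Real.continuous_exp.comp
      (continuous_const.mul (continuous_norm.pow 2))).mul
      (continuous_norm.pow k)).aestronglyMeasurable
  · set t : ℝ := ‖z‖ with ht
    have ht0 : 0 ≤ t := norm_nonneg z
    have hnz : ‖z‖ = t := rfl
    have hb2 : (0:ℝ) < 2 * b := by linarith
    have h1 : t ^ k ≤ Real.exp t * k.factorial := by
      have := Real.pow_div_factorial_le_exp t ht0 k
      rw [div_le_iff₀ (by positivity)] at this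
      exact this
    have h2 : t - b * t ^ 2 ≤ (2 * b)⁻¹ + -(b / 2) * t ^ 2 := by
      have hkey : (2 * b)⁻¹ + -(b / 2) * t ^ 2 - (t - b * t ^ 2)
          = (2 * b)⁻¹ * (b * t - 1) ^ 2 := by
        field_simp
        ring
      have hnn : 0 ≤ (2 * b)⁻¹ * (b * t - 1) ^ 2 :=
        mul_nonneg (inv_nonneg.mpr hb2.le) (sq_nonneg _)
      linarith
    have hpos : 0 ≤ Real.exp (-b * t ^ 2) * t ^ k := by positivity
    rw [Real.norm_of_nonneg hpos]
    calc Real.exp (-b * t ^ 2) * t ^ k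
        ≤ Real.exp (-b * t ^ 2) * (Real.exp t * k.factorial) := by
          exact mul_le_mul_of_nonneg_left h1 (Real.exp_pos _).le
      _ = (k.factorial : ℝ) * Real.exp (t - b * t ^ 2) := by
          rw [show t - b * t ^ 2 = -b * t ^ 2 + t by ring, Real.exp_add]
          ring
      _ ≤ (k.factorial : ℝ) * Real.exp ((2 * b)⁻¹ + -(b / 2) * t ^ 2) := by
          have := Real.exp_le_exp.mpr h2
          exact mul_le_mul_of_nonneg_left this (by positivity)
      _ = (k.factorial : ℝ) * Real.exp ((2 * b)⁻¹) * Real.exp (-(b / 2) * t ^ 2) := by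
          rw [Real.exp_add]; ring

lemma integral_gauss_pow {r : ℝ} (hr : 0 < r) (k : ℕ) :
    ∫ z : ℂ, (Real.pi * r)⁻¹ * Real.exp (-‖z‖ ^ 2 / r) * ‖z‖ ^ k
      = r ^ ((k : ℝ) / 2) * Real.Gamma ((k : ℝ) / 2 + 1) := by
  have h0 : ∀ z : ℂ, (Real.pi * r)⁻¹ * Real.exp (-‖z‖ ^ 2 / r) * ‖z‖ ^ k
      = (Real.pi * r)⁻¹ * (‖z‖ ^ ((k : ℝ)) * Real.exp (-(r⁻¹) * ‖z‖ ^ (2 : ℝ))) := by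
    intro z
    have hn : ‖z‖ = ‖z‖ := rfl
    have h2 : ‖z‖ ^ (2 : ℝ) = ‖z‖ ^ 2 := by
      rw [hn, show (2:ℝ) = ((2:ℕ):ℝ) by norm_num, Real.rpow_natCast]
    have hk : ‖z‖ ^ ((k : ℝ)) = ‖z‖ ^ k := by rw [hn, Real.rpow_natCast]
    rw [h2, hk]
    have harg : -‖z‖ ^ 2 / r = -r⁻¹ * ‖z‖ ^ 2 := by ring
    rw [harg]; ring
  simp_rw [h0]
  rw [MeasureTheory.integral_const_mul,
    Complex.integral_rpow_mul_exp_neg_mul_rpow (by norm_num)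
      (by have : (0:ℝ) ≤ (k:ℝ) := Nat.cast_nonneg k; linarith) (inv_pos.mpr hr)]
  have hrp : (r⁻¹ : ℝ) ^ (-((k : ℝ) + 2) / 2) = r ^ (((k : ℝ) + 2) / 2) := by
    rw [Real.inv_rpow hr.le, ← Real.rpow_neg hr.le, neg_div, neg_neg]
  rw [hrp]
  have hr2 : r ^ (((k : ℝ) + 2) / 2) = r ^ ((k : ℝ) / 2) * r := by
    rw [show ((k : ℝ) + 2) / 2 = (k : ℝ) / 2 + 1 by ring, Real.rpow_add hr, Real.rpow_one]
  have hg : Real.Gamma (((k : ℝ) + 2) / 2) = Real.Gamma ((k : ℝ) / 2 + 1) := by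
    congr 1; ring
  rw [hr2, hg]
  have hπ : (Real.pi : ℝ) ≠ 0 := Real.pi_ne_zero
  field_simp

lemma nuC_of_nonpos {r : ℝ} (hr : r ≤ 0) : nuC r = 0 := by
  rw [nuC]
  have h : (fun z : ℂ =>
      ENNReal.ofReal ((Real.pi * r)⁻¹ * Real.exp (-‖z‖ ^ 2 / r))) = 0 := by
    funext z
    show _ = (0 : ℝ≥0∞)
    have h1 : Real.pi * r ≤ 0 := by nlinarith [Real.pi_pos]
    have h2 : (Real.pi * r)⁻¹ ≤ 0 := inv_nonpos.mpr h1
    have h3 : (Real.pi * r)⁻¹ * Real.exp (-‖z‖ ^ 2 / r) ≤ 0 :=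
      mul_nonpos_of_nonpos_of_nonneg h2 (Real.exp_pos _).le
    exact ENNReal.ofReal_of_nonpos h3
  rw [h, withDensity_zero]

lemma gaussDens_nonneg {r : ℝ} (hr : 0 < r) (z : ℂ) :
    0 ≤ (Real.pi * r)⁻¹ * Real.exp (-‖z‖ ^ 2 / r) := by
  have := Real.pi_pos
  positivity

lemma integrable_gaussDens_pow {r : ℝ} (hr : 0 < r) (k : ℕ) :
    Integrable (fun z : ℂ =>
      (Real.pi * r)⁻¹ * Real.exp (-‖z‖ ^ 2 / r) * ‖z‖ ^ k) volume := by
  have h := ((integrable_gauss_pow (inv_pos.mpr hr) k).const_mul (Real.pi * r)⁻¹)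
  refine h.congr (Filter.Eventually.of_forall fun z => ?_)
  show (Real.pi * r)⁻¹ * (Real.exp (-r⁻¹ * ‖z‖ ^ 2) * ‖z‖ ^ k)
    = (Real.pi * r)⁻¹ * Real.exp (-‖z‖ ^ 2 / r) * ‖z‖ ^ k
  have harg : -r⁻¹ * ‖z‖ ^ 2 = -‖z‖ ^ 2 / r := by ring
  rw [harg]; ring

lemma lintegral_pow_nuC {r : ℝ} (hr : 0 < r) (k : ℕ) :
    ∫⁻ z, ENNReal.ofReal (‖z‖ ^ k) ∂nuC r
      = ENNReal.ofReal (r ^ ((k : ℝ) / 2) * Real.Gamma ((k : ℝ) / 2 + 1)) := by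
  rw [nuC, lintegral_withDensity_eq_lintegral_mul _
    (measurable_gaussDens r).ennreal_ofReal
    ((continuous_norm.measurable.pow_const k).ennreal_ofReal)]
  have h : ∀ z : ℂ,
      ENNReal.ofReal ((Real.pi * r)⁻¹ * Real.exp (-‖z‖ ^ 2 / r)) *
        ENNReal.ofReal (‖z‖ ^ k)
      = ENNReal.ofReal
          ((Real.pi * r)⁻¹ * Real.exp (-‖z‖ ^ 2 / r) * ‖z‖ ^ k) := by
    intro z
    rw [← ENNReal.ofReal_mul (gaussDens_nonneg hr z)]
  simp only [Pi.mul_apply, Function.comp]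
  rw [lintegral_congr fun z => h z,
    ← ofReal_integral_eq_lintegral_ofReal (integrable_gaussDens_pow hr k)
      (Filter.Eventually.of_forall fun z => by
        have := gaussDens_nonneg hr z; positivity),
    integral_gauss_pow hr k]

lemma nuC_univ_le_one (r : ℝ) : nuC r Set.univ ≤ 1 := by
  rcases le_or_gt r 0 with hr | hr
  · simp [nuC_of_nonpos hr]
  · have h := lintegral_pow_nuC hr 0
    simp only [pow_zero, ENNReal.ofReal_one, lintegral_one, Nat.cast_zero, zero_div,
      Real.rpow_zero, zero_add, Real.Gamma_one, one_mul] at h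
    simp [h]

lemma measurable_nuC : Measurable nuC := by
  apply Measure.measurable_of_measurable_coe
  intro s hs
  simp_rw [nuC, withDensity_apply _ hs]
  have hmeas : Measurable (Function.uncurry fun (r : ℝ) (z : ℂ) =>
      ENNReal.ofReal ((Real.pi * r)⁻¹ * Real.exp (-‖z‖ ^ 2 / r))) := by
    apply Measurable.ennreal_ofReal
    exact ((measurable_const.mul measurable_fst).inv).mul
      (Real.measurable_exp.comp
        (((continuous_norm.measurable.comp measurable_snd).pow_const 2).neg.div
          measurable_fst))
  exact Measurable.lintegral_prod_right hmeas

/-- The Gaussian family as a kernel. -/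
noncomputable def nuK : Kernel ℝ ℂ := ⟨nuC, measurable_nuC⟩

@[simp] lemma nuK_apply (r : ℝ) : nuK r = nuC r := rfl

instance : IsFiniteKernel nuK :=
  ⟨⟨1, ENNReal.one_lt_top, fun r => nuC_univ_le_one r⟩⟩

lemma bind_nuC_eq_snd (μ : Measure ℝ) [SFinite μ] :
    μ.bind nuC = (μ ⊗ₘ nuK).snd := by
  ext s hs
  rw [Measure.snd_apply hs, Measure.compProd_apply (measurable_snd hs),
    Measure.bind_apply hs measurable_nuC.aemeasurable]
  rfl

lemma integral_bind_nuC {μ : Measure ℝ} [SFinite μ] {g : ℂ → ℂ} (hg : Continuous g)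
    (hfin : HasFiniteIntegral (fun p : ℝ × ℂ => g p.2) (μ ⊗ₘ nuK)) :
    ∫ z, g z ∂(μ.bind nuC) = ∫ r, ∫ z, g z ∂nuC r ∂μ := by
  have hint : Integrable (fun p : ℝ × ℂ => g p.2) (μ ⊗ₘ nuK) :=
    ⟨(hg.comp continuous_snd).aestronglyMeasurable, hfin⟩
  rw [bind_nuC_eq_snd, show (μ ⊗ₘ nuK).snd = (μ ⊗ₘ nuK).map Prod.snd from rfl,
    integral_map measurable_snd.aemeasurable hg.aestronglyMeasurable]
  exact Measure.integral_compProd hint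

/-! ### Complex Gaussian moments -/

lemma angular_int {m n : ℕ} (hmn : m ≠ n) :
    ∫ θ in Set.Ioo (-Real.pi) Real.pi, Complex.exp (((m : ℂ) - n) * θ * Complex.I) = 0 := by
  set k : ℤ := (m : ℤ) - n with hk
  have hkne : k ≠ 0 := by
    simp only [hk, sub_ne_zero, Ne]
    exact_mod_cast hmn
  have hcast : ((m : ℂ) - n) = (k : ℂ) := by push_cast [hk]; ring
  have hc : ((k : ℂ)) * Complex.I ≠ 0 :=
    mul_ne_zero (by exact_mod_cast hkne) Complex.I_ne_zero
  have h1 : ∀ θ : ℝ, ((m : ℂ) - n) * θ * Complex.I = ((k : ℂ) * Complex.I) * θ := by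
    intro θ; rw [hcast]; ring
  simp_rw [h1]
  rw [← MeasureTheory.integral_Ioc_eq_integral_Ioo,
    ← intervalIntegral.integral_of_le (by linarith [Real.pi_pos] : -Real.pi ≤ Real.pi),
    integral_exp_mul_complex hc]
  have e1 : (k : ℂ) * Complex.I * (Real.pi : ℂ) = (k : ℂ) * ((Real.pi : ℂ) * Complex.I) := by ring
  have e2 : (k : ℂ) * Complex.I * ((-Real.pi : ℝ) : ℂ)
      = ((-k : ℤ) : ℂ) * ((Real.pi : ℂ) * Complex.I) := by push_cast; ring
  rw [e1, e2, Complex.exp_int_mul, Complex.exp_int_mul, Complex.exp_pi_mul_I]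
  have h2 : ((-1 : ℂ)) ^ (-k) = ((-1 : ℂ)) ^ k := by
    rw [zpow_neg, ← inv_zpow, show ((-1 : ℂ))⁻¹ = -1 by norm_num]
  rw [h2, sub_self, zero_div]

lemma integral_nuC_smul {r : ℝ} (hr : 0 < r) (g : ℂ → ℂ) :
    ∫ z, g z ∂nuC r
      = ∫ z, ((Real.pi * r)⁻¹ * Real.exp (-‖z‖ ^ 2 / r)) • g z := by
  rw [nuC]
  exact integral_withDensity_ofReal (measurable_gaussDens r) (gaussDens_nonneg hr) g

lemma moment_nuC {r : ℝ} (hr : 0 < r) (m n : ℕ) :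
    ∫ z, z ^ m * (starRingEnd ℂ) (z ^ n) ∂nuC r
      = if m = n then ((r ^ n * n.factorial : ℝ) : ℂ) else 0 := by
  rw [integral_nuC_smul hr]
  by_cases hmn : m = n
  · subst hmn
    rw [if_pos rfl]
    have h1 : ∀ z : ℂ,
        ((Real.pi * r)⁻¹ * Real.exp (-‖z‖ ^ 2 / r)) •
            (z ^ m * (starRingEnd ℂ) (z ^ m))
          = (((Real.pi * r)⁻¹ * Real.exp (-‖z‖ ^ 2 / r)
              * ‖z‖ ^ (2 * m) : ℝ) : ℂ) := by
      intro z
      have h2 : z ^ m * (starRingEnd ℂ) (z ^ m) = ((‖z‖ ^ (2 * m) : ℝ) : ℂ) := by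
        rw [Complex.mul_conj, ← Complex.sq_norm, norm_pow, ← pow_mul, mul_comm m 2]
      rw [h2, Complex.real_smul, ← Complex.ofReal_mul]
    simp_rw [h1]
    rw [show (∫ z : ℂ, (((Real.pi * r)⁻¹ * Real.exp (-‖z‖ ^ 2 / r)
          * ‖z‖ ^ (2 * m) : ℝ) : ℂ))
        = (((∫ z : ℂ, (Real.pi * r)⁻¹ * Real.exp (-‖z‖ ^ 2 / r)
          * ‖z‖ ^ (2 * m) : ℝ)) : ℂ) from integral_ofReal,
      integral_gauss_pow hr (2 * m)]
    have h3 : ((2 * m : ℕ) : ℝ) / 2 = (m : ℝ) := by push_cast; ring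
    rw [h3, Real.rpow_natCast, Real.Gamma_nat_eq_factorial]
  · simp only [if_neg hmn]
    rw [← Complex.integral_comp_polarCoord_symm]
    have hkey : Set.EqOn
        (fun p : ℝ × ℝ => p.1 •
          (((Real.pi * r)⁻¹ * Real.exp (-(‖Complex.polarCoord.symm p‖) ^ 2 / r)) •
            ((Complex.polarCoord.symm p) ^ m *
              (starRingEnd ℂ) ((Complex.polarCoord.symm p) ^ n))))
        (fun p : ℝ × ℝ =>
          (fun ρ : ℝ => ((ρ ^ (m + n + 1) * ((Real.pi * r)⁻¹ * Real.exp (-ρ ^ 2 / r)) : ℝ) : ℂ))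
              p.1 *
          (fun θ : ℝ => Complex.exp (((m : ℂ) - n) * θ * Complex.I)) p.2)
        (Set.Ioi (0 : ℝ) ×ˢ Set.Ioo (-Real.pi) Real.pi) := by
      rintro ⟨ρ, θ⟩ ⟨hρ, hθ⟩
      have hρ0 : (0 : ℝ) < ρ := hρ
      have habs : ‖Complex.polarCoord.symm (ρ, θ)‖ = ρ := by
        rw [Complex.norm_polarCoord_symm, abs_of_pos hρ0]
      have hsym : Complex.polarCoord.symm (ρ, θ) = (ρ : ℂ) * Complex.exp (θ * Complex.I) := by
        rw [Complex.polarCoord_symm_apply, Complex.exp_mul_I]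
        push_cast
        ring
      dsimp only
      rw [habs, hsym]
      have hconj : (starRingEnd ℂ) (((ρ : ℂ) * Complex.exp ((θ : ℂ) * Complex.I)) ^ n)
          = (ρ : ℂ) ^ n * Complex.exp (-((θ : ℂ) * Complex.I)) ^ n := by
        rw [map_pow, map_mul, Complex.conj_ofReal, ← Complex.exp_conj, map_mul,
          Complex.conj_ofReal, Complex.conj_I, mul_pow]
        ring_nf
      rw [hconj, mul_pow]
      have hsplit : ((m : ℂ) - n) * θ * Complex.I
          = (m : ℂ) * ((θ : ℂ) * Complex.I) + (n : ℂ) * (-((θ : ℂ) * Complex.I)) := by ring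
      rw [hsplit, Complex.exp_add, ← Complex.exp_nat_mul, ← Complex.exp_nat_mul,
        Complex.real_smul, Complex.real_smul]
      push_cast
      ring
    rw [polarCoord_target]
    rw [MeasureTheory.setIntegral_congr_fun
      (measurableSet_Ioi.prod measurableSet_Ioo) hkey]
    rw [MeasureTheory.Measure.volume_eq_prod]
    refine (MeasureTheory.setIntegral_prod_mul
      (fun ρ : ℝ => ((ρ ^ (m + n + 1) * ((Real.pi * r)⁻¹ * Real.exp (-ρ ^ 2 / r)) : ℝ) : ℂ))
      (fun θ : ℝ => Complex.exp (((m : ℂ) - n) * θ * Complex.I))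
      (Set.Ioi (0 : ℝ)) (Set.Ioo (-Real.pi) Real.pi)).trans ?_
    rw [angular_int hmn, mul_zero]

/-! ### Gamma distribution facts -/

lemma gammaDens_nonneg {η σ : ℝ} (hη : 0 < η) (hσ : 0 < σ) (r : ℝ) :
    0 ≤ (if 0 < r then
      (Real.Gamma (σ / η))⁻¹ * η ^ (-(σ / η)) * r ^ (σ / η - 1) * Real.exp (-r / η)
    else 0) := by
  split_ifs with h
  · have hΓ : 0 < Real.Gamma (σ / η) := Real.Gamma_pos_of_pos (div_pos hσ hη)
    positivity
  · exact le_refl 0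

lemma measurable_gammaDens (η σ : ℝ) :
    Measurable fun r : ℝ => (if 0 < r then
      (Real.Gamma (σ / η))⁻¹ * η ^ (-(σ / η)) * r ^ (σ / η - 1) * Real.exp (-r / η)
    else 0) := by
  apply Measurable.ite measurableSet_Ioi _ measurable_const
  fun_prop

instance gammaMeas_sfinite (η σ : ℝ) : SFinite (gammaMeas η σ) :=
  inferInstanceAs (SFinite (volume.withDensity _))

lemma gammaMeas_ae_pos (η σ : ℝ) : ∀ᵐ r ∂gammaMeas η σ, 0 < r := by
  rw [ae_iff]
  have hset : {r : ℝ | ¬0 < r} = Set.Iic 0 := by ext r; simp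
  rw [hset, gammaMeas, withDensity_apply _ measurableSet_Iic]
  have h : ∀ᵐ r ∂volume, r ∈ Set.Iic (0:ℝ) →
      ENNReal.ofReal (if 0 < r then
        (Real.Gamma (σ / η))⁻¹ * η ^ (-(σ / η)) * r ^ (σ / η - 1) * Real.exp (-r / η)
      else 0) = (0 : ℝ≥0∞) := by
    refine Filter.Eventually.of_forall fun r hr => ?_
    rw [if_neg (not_lt.mpr hr), ENNReal.ofReal_zero]
  rw [setLIntegral_congr_fun (g := fun _ => 0) measurableSet_Iic
    (fun r hr => by rw [if_neg (not_lt.mpr hr), ENNReal.ofReal_zero]), lintegral_zero]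

lemma Gamma_add_nat {a : ℝ} (ha : 0 < a) (n : ℕ) :
    Real.Gamma (a + n) = Real.Gamma a * ∏ j ∈ Finset.range n, (a + j) := by
  induction n with
  | zero => simp
  | succ k ih =>
    have h : a + ((k : ℕ) + 1 : ℕ) = (a + k) + 1 := by push_cast; ring
    rw [h, Real.Gamma_add_one (by positivity : (0:ℝ) < a + k).ne', ih,
      Finset.prod_range_succ]
    ring

lemma integral_Ioi_rpow_exp {q b : ℝ} (hq : -1 < q) (hb : 0 < b) :
    ∫ x in Set.Ioi (0:ℝ), x ^ q * Real.exp (-b * x)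
      = b ^ (-(q + 1)) * Real.Gamma (q + 1) := by
  have h := integral_rpow_mul_exp_neg_mul_rpow (p := 1) (q := q) (b := b) one_pos hq hb
  have h2 : ∫ x in Set.Ioi (0:ℝ), x ^ q * Real.exp (-b * x)
      = ∫ x in Set.Ioi (0:ℝ), x ^ q * Real.exp (-b * x ^ (1:ℝ)) := by
    refine MeasureTheory.setIntegral_congr_fun measurableSet_Ioi fun x hx => ?_
    rw [Real.rpow_one]
  rw [h2, h]
  norm_num

lemma gammaMeas_integral_pow {η σ : ℝ} (hη : 0 < η) (hσ : 0 < σ) (n : ℕ) :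
    ∫ r, r ^ n ∂gammaMeas η σ = ∏ j ∈ Finset.range n, (σ + j * η) := by
  set a := σ / η with ha_def
  have ha : 0 < a := div_pos hσ hη
  have hΓ : 0 < Real.Gamma a := Real.Gamma_pos_of_pos ha
  rw [gammaMeas,
    integral_withDensity_ofReal (measurable_gammaDens η σ) (gammaDens_nonneg hη hσ)]
  simp only [smul_eq_mul]
  have hind : (fun r : ℝ =>
      (if 0 < r then (Real.Gamma a)⁻¹ * η ^ (-a) * r ^ (a - 1) * Real.exp (-r / η) else 0)
        * r ^ n)
      = Set.indicator (Set.Ioi (0:ℝ))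
          (fun r => ((Real.Gamma a)⁻¹ * η ^ (-a)) * (r ^ (a - 1 + n) * Real.exp (-η⁻¹ * r))) := by
    funext r
    rw [Set.indicator_apply]
    by_cases h : 0 < r
    · rw [if_pos h, if_pos (Set.mem_Ioi.mpr h)]
      rw [Real.rpow_add h, Real.rpow_natCast]
      have : -r / η = -η⁻¹ * r := by ring
      rw [this]
      ring
    · rw [if_neg h, if_neg (fun hmem => h (Set.mem_Ioi.mp hmem)), zero_mul]
  rw [hind, MeasureTheory.integral_indicator measurableSet_Ioi,
    MeasureTheory.integral_const_mul,
    integral_Ioi_rpow_exp (by push_cast; linarith [Nat.cast_nonneg (α := ℝ) n]) (inv_pos.mpr hη)]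
  have hsimp : a - 1 + (n : ℝ) + 1 = a + n := by ring
  rw [hsimp]
  have hinv : (η⁻¹ : ℝ) ^ (-(a + (n:ℝ))) = η ^ (a + (n:ℝ)) := by
    rw [Real.inv_rpow hη.le, ← Real.rpow_neg hη.le, neg_neg]
  rw [hinv, Gamma_add_nat ha n]
  have hηpow : η ^ (-a) * η ^ (a + (n:ℝ)) = η ^ (n : ℕ) := by
    rw [← Real.rpow_add hη, ← Real.rpow_natCast η n]
    congr 1; ring
  have haη : a * η = σ := div_mul_cancel₀ σ hη.ne'
  have hprod : ∏ j ∈ Finset.range n, (σ + (j : ℝ) * η)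
      = (∏ j ∈ Finset.range n, (a + j)) * η ^ n := by
    rw [show (∏ j ∈ Finset.range n, (a + (j:ℝ))) * η ^ n
        = ∏ j ∈ Finset.range n, ((a + (j:ℝ)) * η) by
      rw [Finset.prod_mul_distrib, Finset.prod_const, Finset.card_range]]
    refine Finset.prod_congr rfl fun j _ => ?_
    rw [add_mul, haη]
  calc (Real.Gamma a)⁻¹ * η ^ (-a) *
        (η ^ (a + (n:ℝ)) * (Real.Gamma a * ∏ j ∈ Finset.range n, (a + (j:ℝ))))
      = ((Real.Gamma a)⁻¹ * Real.Gamma a) * (η ^ (-a) * η ^ (a + (n:ℝ)))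
          * ∏ j ∈ Finset.range n, (a + (j:ℝ)) := by ring
    _ = (∏ j ∈ Finset.range n, (a + (j:ℝ))) * η ^ n := by
        rw [inv_mul_cancel₀ hΓ.ne', hηpow]; ring
    _ = ∏ j ∈ Finset.range n, (σ + (j:ℝ) * η) := hprod.symm

lemma gammaMeas_lintegral_lt_top {η σ : ℝ} (hη : 0 < η) (hσ : 0 < σ) {s : ℝ} (hs : 0 ≤ s)
    {C : ℝ} (hC : 0 ≤ C) :
    ∫⁻ r, (if 0 < r then ENNReal.ofReal (r ^ s * C) else 0) ∂gammaMeas η σ < ⊤ := by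
  set a := σ / η with ha_def
  have ha : 0 < a := div_pos hσ hη
  have hΓ : 0 < Real.Gamma a := Real.Gamma_pos_of_pos ha
  have hmeas2 : Measurable fun r : ℝ => (if 0 < r then ENNReal.ofReal (r ^ s * C) else 0 : ℝ≥0∞) := by
    apply Measurable.ite measurableSet_Ioi _ measurable_const
    apply ENNReal.measurable_ofReal.comp
    fun_prop
  rw [gammaMeas, lintegral_withDensity_eq_lintegral_mul _
    (measurable_gammaDens η σ).ennreal_ofReal hmeas2]
  set G : ℝ → ℝ := Set.indicator (Set.Ioi (0:ℝ))
    (fun r => ((Real.Gamma a)⁻¹ * η ^ (-a) * C) * (r ^ (a - 1 + s) * Real.exp (-η⁻¹ * r)))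
    with hG_def
  have hpt : ∀ r : ℝ,
      (ENNReal.ofReal (if 0 < r then
          (Real.Gamma a)⁻¹ * η ^ (-a) * r ^ (a - 1) * Real.exp (-r / η) else 0))
        * (if 0 < r then ENNReal.ofReal (r ^ s * C) else 0)
      = ENNReal.ofReal (G r) := by
    intro r
    by_cases h : 0 < r
    · rw [if_pos h, if_pos h, hG_def, Set.indicator_of_mem (Set.mem_Ioi.mpr h)]
      rw [← ENNReal.ofReal_mul (by positivity)]
      congr 1
      rw [Real.rpow_add h]
      have : -r / η = -η⁻¹ * r := by ring
      rw [this]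
      ring
    · rw [if_neg h, if_neg h, hG_def,
        Set.indicator_of_notMem (show r ∉ Set.Ioi (0:ℝ) from fun hmem => h hmem)]
      simp
  have hGint : Integrable G volume := by
    rw [hG_def]
    apply MeasureTheory.IntegrableOn.integrable_indicator _ measurableSet_Ioi
    apply Integrable.const_mul
    have hbase := integrableOn_rpow_mul_exp_neg_mul_rpow
      (s := a - 1 + s) (p := 1) (b := η⁻¹) (by linarith) one_pos (inv_pos.mpr hη)
    refine hbase.congr_fun (fun x hx => ?_) measurableSet_Ioi
    simp only [Real.rpow_one]
  calc ∫⁻ r, (((fun r : ℝ => ENNReal.ofReal (if 0 < r then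
          (Real.Gamma a)⁻¹ * η ^ (-a) * r ^ (a - 1) * Real.exp (-r / η) else 0)) *
        (fun r : ℝ => if 0 < r then ENNReal.ofReal (r ^ s * C) else 0)) r)
      = ∫⁻ r, ENNReal.ofReal (G r) := by
        refine lintegral_congr fun r => ?_
        simp only [Pi.mul_apply]
        exact hpt r
    _ ≤ ∫⁻ r, (‖G r‖₊ : ℝ≥0∞) := lintegral_mono fun r => Real.ofReal_le_enorm _
    _ < ⊤ := hGint.hasFiniteIntegral

end GaussMixAux

open GaussMixAux

theorem stmt_16 (η σ : ℝ) (hη : 0 < η) (hσ : 0 < σ) (m n : ℕ) :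
    ∫ z : ℂ, z ^ m * (starRingEnd ℂ) (z ^ n) ∂(lambdaMeas η σ) =
      if m = n then (n.factorial : ℂ) * ∏ j ∈ Finset.range n, ((σ : ℂ) + j * η) else 0 := by
  classical
  set g : ℂ → ℂ := fun z => z ^ m * (starRingEnd ℂ) (z ^ n) with hg_def
  have hgc : Continuous g :=
    (continuous_pow m).mul (Complex.continuous_conj.comp (continuous_pow n))
  have hnorm : ∀ z : ℂ, ‖g z‖ = ‖z‖ ^ (m + n) := by
    intro z
    show ‖z ^ m * (starRingEnd ℂ) (z ^ n)‖ = ‖z‖ ^ (m + n)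
    rw [map_pow (starRingEnd ℂ),
      show ‖z ^ m * (starRingEnd ℂ) z ^ n‖ = ‖z ^ m * (starRingEnd ℂ) z ^ n‖
        from rfl,
      norm_mul, norm_pow, norm_pow, Complex.norm_conj, pow_add]
  set k : ℕ := m + n with hk_def
  set C : ℝ := Real.Gamma ((k : ℝ) / 2 + 1) with hC_def
  have hC : 0 ≤ C := (Real.Gamma_pos_of_pos (by positivity)).le
  have hfin : HasFiniteIntegral (fun p : ℝ × ℂ => g p.2) ((gammaMeas η σ) ⊗ₘ nuK) := by
    have hmeas : Measurable fun p : ℝ × ℂ => (‖g p.2‖₊ : ℝ≥0∞) :=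
      ((hgc.comp continuous_snd).measurable).nnnorm.coe_nnreal_ennreal
    rw [MeasureTheory.HasFiniteIntegral, Measure.lintegral_compProd (f := fun p : ℝ × ℂ => ‖g p.2‖ₑ) hmeas]
    have hinner : ∀ r : ℝ, ∫⁻ z, (‖g z‖₊ : ℝ≥0∞) ∂nuC r
        = (if 0 < r then ENNReal.ofReal (r ^ ((k : ℝ) / 2) * C) else 0) := by
      intro r
      by_cases hr : 0 < r
      · rw [if_pos hr, hC_def, ← lintegral_pow_nuC hr k]
        refine lintegral_congr fun z => ?_
        rw [show (‖g z‖₊ : ℝ≥0∞) = ENNReal.ofReal ‖g z‖ from (ofReal_norm (g z)).symm, hnorm]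
      · rw [if_neg hr, nuC_of_nonpos (not_lt.mp hr)]
        simp
    calc ∫⁻ r, ∫⁻ z, (‖g z‖₊ : ℝ≥0∞) ∂nuK r ∂gammaMeas η σ
        = ∫⁻ r, (if 0 < r then ENNReal.ofReal (r ^ ((k : ℝ) / 2) * C) else 0)
            ∂gammaMeas η σ := by
          refine lintegral_congr fun r => ?_
          rw [nuK_apply]
          exact hinner r
      _ < ⊤ := gammaMeas_lintegral_lt_top hη hσ (by positivity) hC
  rw [lambdaMeas, integral_bind_nuC hgc hfin]
  by_cases hmn : m = n
  · subst hmn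
    rw [if_pos rfl]
    have h1 : (fun r : ℝ => ∫ z, g z ∂nuC r)
        =ᵐ[gammaMeas η σ] fun r => ((r ^ m * m.factorial : ℝ) : ℂ) := by
      filter_upwards [gammaMeas_ae_pos η σ] with r hr
      have := moment_nuC hr m m
      rw [if_pos rfl] at this
      exact this
    rw [integral_congr_ae h1]
    rw [show (∫ r : ℝ, ((r ^ m * (m.factorial : ℝ) : ℝ) : ℂ) ∂gammaMeas η σ)
        = (((∫ r : ℝ, r ^ m * (m.factorial : ℝ) ∂gammaMeas η σ : ℝ)) : ℂ) from integral_ofReal,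
      MeasureTheory.integral_mul_const, gammaMeas_integral_pow hη hσ m]
    push_cast
    ring
  · rw [if_neg hmn]
    have h1 : (fun r : ℝ => ∫ z, g z ∂nuC r) =ᵐ[gammaMeas η σ] fun _ => (0 : ℂ) := by
      filter_upwards [gammaMeas_ae_pos η σ] with r hr
      have := moment_nuC hr m n
      rw [if_neg hmn] at this
      exact this
    rw [integral_congr_ae h1, integral_zero]
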